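/- arXiv:2011.12136 — 8 statements merged into one kernel-verified Lean document; each statement's English description precedes it below -/
import Mathlib

section
/- For each φ ∈ (0, π/2) there is exactly one ψ ∈ (0, π) satisfying cot(φ) = cot(ψ) + (π − ψ)·csc²(ψ). Consequently, the function ψ ↦ cot(ψ) + (π−ψ)/sin²(ψ) is a strictly decreasing homeomorphism from (0, π) onto (0, ∞). -/
open Real Set

private lemma aux_tan {u : ℝ} (hu : u ∈ Set.Ioo (0:ℝ) π) : u * Real.cos u < Real.sin u := by
  obtain ⟨hu0, huπ⟩ := hu
  rcases le_or_gt (π/2) u with h | h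
  · have hc : Real.cos u ≤ 0 := Real.cos_nonpos_of_pi_div_two_le_of_le h (by linarith)
    have hs : 0 < Real.sin u := Real.sin_pos_of_pos_of_lt_pi hu0 huπ
    nlinarith
  · have ht := Real.lt_tan hu0 h
    have hc : 0 < Real.cos u := Real.cos_pos_of_mem_Ioo ⟨by linarith [Real.pi_pos], h⟩
    rw [Real.tan_eq_sin_div_cos, lt_div_iff₀ hc] at ht
    linarith

private lemma aux_num_pos {ψ : ℝ} (hψ : ψ ∈ Set.Ioo (0:ℝ) π) :
    0 < Real.sin ψ * Real.cos ψ + (π - ψ) := by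
  obtain ⟨h0, hπ⟩ := hψ
  have h1 : Real.sin (2 * (π - ψ)) < 2 * (π - ψ) := Real.sin_lt (by linarith)
  have h2 : Real.sin (2 * (π - ψ)) = -(2 * Real.sin ψ * Real.cos ψ) := by
    rw [Real.sin_two_mul, Real.sin_pi_sub, Real.cos_pi_sub]; ring
  nlinarith

private lemma aux_key {x : ℝ} (hx : x ∈ Set.Ioo (0:ℝ) π) :
    0 < Real.sin x + (π - x) * Real.cos x := by
  have h := aux_tan (u := π - x) ⟨by linarith [hx.2], by linarith [hx.1]⟩
  rw [Real.sin_pi_sub, Real.cos_pi_sub] at h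
  nlinarith

/-- For each `φ ∈ (0, π/2)` there is a unique `ψ ∈ (0, π)` with
`cot φ = cot ψ + (π − ψ) csc² ψ`; indeed `ψ ↦ cot ψ + (π−ψ)/sin²ψ` is a
strictly decreasing homeomorphism from `(0, π)` onto `(0, ∞)`. -/
theorem stmt6 :
    (∀ φ ∈ Set.Ioo (0:ℝ) (π/2), ∃! ψ : ℝ, ψ ∈ Set.Ioo (0:ℝ) π ∧
      Real.cos φ / Real.sin φ
        = Real.cos ψ / Real.sin ψ + (π - ψ) / Real.sin ψ ^ 2) ∧
    StrictAntiOn (fun ψ : ℝ => Real.cos ψ / Real.sin ψ + (π - ψ) / Real.sin ψ ^ 2)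
      (Set.Ioo 0 π) ∧
    ContinuousOn (fun ψ : ℝ => Real.cos ψ / Real.sin ψ + (π - ψ) / Real.sin ψ ^ 2)
      (Set.Ioo 0 π) ∧
    (fun ψ : ℝ => Real.cos ψ / Real.sin ψ + (π - ψ) / Real.sin ψ ^ 2) ''
      Set.Ioo 0 π = Set.Ioi 0 := by
  set f : ℝ → ℝ := fun ψ => Real.cos ψ / Real.sin ψ + (π - ψ) / Real.sin ψ ^ 2 with hf
  have hsin : ∀ ψ ∈ Set.Ioo (0:ℝ) π, 0 < Real.sin ψ := fun ψ hψ =>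
    Real.sin_pos_of_pos_of_lt_pi hψ.1 hψ.2
  -- f as a single fraction
  have hfrac : ∀ ψ ∈ Set.Ioo (0:ℝ) π,
      f ψ = (Real.sin ψ * Real.cos ψ + (π - ψ)) / Real.sin ψ ^ 2 := by
    intro ψ hψ
    have hs := (hsin ψ hψ).ne'
    show Real.cos ψ / Real.sin ψ + (π - ψ) / Real.sin ψ ^ 2 = _
    rw [div_add_div _ _ hs (pow_ne_zero 2 hs), div_eq_div_iff (mul_ne_zero hs (pow_ne_zero 2 hs)) (pow_ne_zero 2 hs)]
    ring
  -- positivity of f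
  have hpos : ∀ ψ ∈ Set.Ioo (0:ℝ) π, 0 < f ψ := by
    intro ψ hψ
    rw [hfrac ψ hψ]
    exact div_pos (aux_num_pos hψ) (pow_pos (hsin ψ hψ) 2)
  -- continuity
  have hcont : ContinuousOn f (Set.Ioo 0 π) := by
    apply ContinuousOn.add
    · exact ContinuousOn.div Real.continuous_cos.continuousOn
        Real.continuous_sin.continuousOn (fun ψ hψ => (hsin ψ hψ).ne')
    · exact ContinuousOn.div (by fun_prop) (by fun_prop)
        (fun ψ hψ => pow_ne_zero 2 (hsin ψ hψ).ne')
  -- strict antitonicity via derivative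
  have hanti : StrictAntiOn f (Set.Ioo 0 π) := by
    apply strictAntiOn_of_deriv_neg (convex_Ioo 0 π) hcont
    intro x hx
    rw [interior_Ioo] at hx
    have hs : 0 < Real.sin x := hsin x hx
    have hs' : Real.sin x ≠ 0 := hs.ne'
    have h1 : HasDerivAt (fun ψ => Real.cos ψ / Real.sin ψ)
        ((-Real.sin x * Real.sin x - Real.cos x * Real.cos x) / Real.sin x ^ 2) x :=
      (Real.hasDerivAt_cos x).div (Real.hasDerivAt_sin x) hs'
    have h2 : HasDerivAt (fun ψ => Real.sin ψ ^ 2)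
        ((2 : ℕ) * Real.sin x ^ 1 * Real.cos x) x := (Real.hasDerivAt_sin x).pow 2
    have h3 : HasDerivAt (fun ψ : ℝ => π - ψ) (-1) x := (hasDerivAt_id x).const_sub π
    have h4 : HasDerivAt (fun ψ => (π - ψ) / Real.sin ψ ^ 2)
        (((-1) * Real.sin x ^ 2 - (π - x) * ((2 : ℕ) * Real.sin x ^ 1 * Real.cos x))
          / (Real.sin x ^ 2) ^ 2) x := h3.div h2 (pow_ne_zero 2 hs')
    have hD := (h1.add h4).deriv
    rw [hf]
    change deriv ((fun ψ => Real.cos ψ / Real.sin ψ) + fun ψ => (π - ψ) / Real.sin ψ ^ 2) x < 0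
    rw [hD]
    have hkey := aux_key hx
    rw [div_add_div _ _ (pow_ne_zero 2 hs') (pow_ne_zero 2 (pow_ne_zero 2 hs'))]
    apply div_neg_of_neg_of_pos _ (mul_pos (pow_pos hs 2) (pow_pos (pow_pos hs 2) 2))
    have hpyth := Real.sin_sq_add_cos_sq x
    push_cast
    nlinarith [mul_pos (mul_pos (mul_pos hs hs) hs) hkey, sq_nonneg (Real.sin x)]
  -- image equals Ioi 0
  have himg : f '' Set.Ioo 0 π = Set.Ioi 0 := by
    apply Set.Subset.antisymm
    · rintro _ ⟨ψ, hψ, rfl⟩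
      exact hpos ψ hψ
    · intro y hy
      rw [Set.mem_Ioi] at hy
      -- point a near 0 with f a > y
      set a : ℝ := min 1 (1 / (2 * (y + 1))) with ha
      have ha0 : 0 < a := lt_min one_pos (div_pos one_pos (by linarith))
      have ha1 : a ≤ 1 := min_le_left _ _
      have hay : a ≤ 1 / (2 * (y + 1)) := min_le_right _ _
      have haπ : a < π := lt_of_le_of_lt ha1 (by linarith [Real.pi_gt_three])
      have haI : a ∈ Set.Ioo (0:ℝ) π := ⟨ha0, haπ⟩
      have hsa : 0 < Real.sin a := hsin a haI
      have hfa : y < f a := by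
        have hca : (1:ℝ)/2 ≤ Real.cos a := by
          have := Real.one_sub_sq_div_two_le_cos (x := a)
          nlinarith
        have hsla : Real.sin a ≤ a := Real.sin_le ha0.le
        have h1 : y < Real.cos a / Real.sin a := by
          rw [lt_div_iff₀ hsa]
          have hya : y * Real.sin a ≤ y * a := by nlinarith
          have : y * a < 1/2 := by
            have h2y : a * (2 * (y + 1)) ≤ 1 := by
              rw [← le_div_iff₀ (by positivity)]; exact hay
            nlinarith
          linarith
        have h2 : 0 < (π - a) / Real.sin a ^ 2 := div_pos (by linarith) (pow_pos hsa 2)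
        rw [hf]; dsimp only; linarith
      -- point b near π with f b < y
      set u : ℝ := min (1/2) (y/4) with hu
      have hu0 : 0 < u := lt_min (by norm_num) (by linarith)
      have hu1 : u ≤ 1/2 := min_le_left _ _
      have hu2 : u ≤ y/4 := min_le_right _ _
      set b : ℝ := π - u with hb
      have hbI : b ∈ Set.Ioo (0:ℝ) π := ⟨by linarith [Real.pi_gt_three], by linarith⟩
      have hsu : 0 < Real.sin u := Real.sin_pos_of_pos_of_lt_pi hu0
        (by linarith [Real.pi_gt_three])
      have hfb : f b < y := by
        rw [hfrac b hbI, hb, Real.sin_pi_sub, Real.cos_pi_sub]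
        rw [div_lt_iff₀ (pow_pos hsu 2)]
        have hcube1 : 2*u - (2*u)^3/4 < Real.sin (2*u) :=
          by have h := Real.sin_gt_sub_cube (x := 2*u) (by linarith); nlinarith [pow_pos (by linarith : (0:ℝ) < 2*u) 3]
        have hsin2u : Real.sin (2*u) = 2 * Real.sin u * Real.cos u := Real.sin_two_mul u
        have hcube2 : u - u^3/4 < Real.sin u :=
          by have h := Real.sin_gt_sub_cube hu0; nlinarith [pow_pos hu0 3]
        have hsl : (15/16 : ℝ) * u < Real.sin u := by
          nlinarith [mul_nonneg (mul_nonneg hu0.le (by linarith : (0:ℝ) ≤ 1 - 2*u)) (by linarith : (0:ℝ) ≤ 1 + 2*u)]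
        have hsq : ((15/16 : ℝ) * u)^2 < Real.sin u ^ 2 := by
          apply sq_lt_sq' _ hsl; nlinarith
        have hnum : π - (π - u) - Real.sin u * Real.cos u < u^3 := by nlinarith
        have hy4 : 4 * u ≤ y := by linarith
        nlinarith [mul_lt_mul_of_pos_left hsq hy, mul_pos (mul_pos hu0 hu0) hu0,
          mul_le_mul_of_nonneg_right hy4 (mul_pos hu0 hu0).le]
      -- a < b
      have hab : a < b := by
        rcases lt_trichotomy a b with h | h | h
        · exact h
        · exfalso; rw [h] at hfa; linarith
        · exfalso; have := hanti hbI haI h; linarith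
      have hIcc : Set.Icc a b ⊆ Set.Ioo (0:ℝ) π := fun x hx =>
        ⟨lt_of_lt_of_le ha0 hx.1, lt_of_le_of_lt hx.2 hbI.2⟩
      have hIV := intermediate_value_Icc' hab.le (hcont.mono hIcc)
      have : y ∈ Set.Icc (f b) (f a) := ⟨hfb.le, hfa.le⟩
      obtain ⟨ψ, hψmem, hψeq⟩ := hIV this
      exact ⟨ψ, hIcc hψmem, hψeq⟩
  refine ⟨?_, hanti, hcont, himg⟩
  intro φ hφ
  have hsφ : 0 < Real.sin φ := Real.sin_pos_of_pos_of_lt_pi hφ.1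
    (by linarith [hφ.2, Real.pi_pos])
  have hcφ : 0 < Real.cos φ := Real.cos_pos_of_mem_Ioo
    ⟨by linarith [hφ.1, Real.pi_pos], hφ.2⟩
  have hyI : Real.cos φ / Real.sin φ ∈ Set.Ioi (0:ℝ) := div_pos hcφ hsφ
  rw [← himg] at hyI
  obtain ⟨ψ, hψmem, hψeq⟩ := hyI
  have hψeq' : Real.cos φ / Real.sin φ
      = Real.cos ψ / Real.sin ψ + (π - ψ) / Real.sin ψ ^ 2 := hψeq.symm
  refine ⟨ψ, ⟨hψmem, hψeq'⟩, ?_⟩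
  rintro ψ' ⟨hψ'mem, hψ'eq⟩
  have h1 : f ψ' = f ψ := by
    have h2 : f ψ' = Real.cos φ / Real.sin φ := hψ'eq.symm
    rw [h2, hψeq]
  exact hanti.injOn hψ'mem hψmem h1
end

section
/- Any billiard trajectory in the infinite cylinder Z = D² × ℝ over the unit disc (for the standard sub-Riemannian structure on ℝ³) that never touches the boundary ∂Z is never periodic: a geodesic of (ℝ³, ξ_std, g_std) whose planar projection is a circle of positive radius contained in the open unit disc satisfies z(t + T) = z(t) + A for all t, where T is the period of the projection and A > 0 is the area of the projected circle; hence the curve is not closed. -/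
open Real

/-- A geodesic of the standard sub-Riemannian structure on `ℝ³` whose planar
projection is a circle of positive radius contained in the open unit disc
gains height `πρ² > 0` after each period of the projection; in particular it is
never periodic, so the billiard in the infinite cylinder `D² × ℝ` has no
periodic trajectories avoiding the boundary. -/
theorem stmt7 (ρ cx cy : ℝ) (hρ : 0 < ρ)
    (hdisc : Real.sqrt (cx ^ 2 + cy ^ 2) + ρ < 1)
    (z : ℝ → ℝ)
    (hz : ∀ t, HasDerivAt z
      (((cx + ρ * Real.cos t) * (ρ * Real.cos t)
        - (cy + ρ * Real.sin t) * (-(ρ * Real.sin t))) / 2) t) :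
    (∀ t, z (t + 2 * π) = z t + π * ρ ^ 2) ∧
    ¬ ∃ P > 0, ∀ t : ℝ,
      cx + ρ * Real.cos (t + P) = cx + ρ * Real.cos t ∧
      cy + ρ * Real.sin (t + P) = cy + ρ * Real.sin t ∧
      z (t + P) = z t := by
  set F : ℝ → ℝ := fun t => (ρ * (cx * Real.sin t - cy * Real.cos t) + ρ ^ 2 * t) / 2
    with hF
  have hF' : ∀ t, HasDerivAt F ((ρ * (cx * Real.cos t + cy * Real.sin t) + ρ ^ 2) / 2) t := by
    intro t
    have h1 : HasDerivAt Real.sin (Real.cos t) t := Real.hasDerivAt_sin t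
    have h2 : HasDerivAt Real.cos (-Real.sin t) t := Real.hasDerivAt_cos t
    have h3 : HasDerivAt (fun t : ℝ => t) 1 t := hasDerivAt_id t
    have := (((h1.const_mul cx).sub (h2.const_mul cy)).const_mul ρ).add
      (h3.const_mul (ρ ^ 2))
    have h4 := this.div_const 2
    refine h4.congr_deriv ?_
    ring
  have hdiff : ∀ t, HasDerivAt (fun t => z t - F t) 0 t := by
    intro t
    have h := (hz t).sub (hF' t)
    refine h.congr_deriv ?_
    have hsc := Real.sin_sq_add_cos_sq t
    linear_combination (ρ ^ 2 / 2) * hsc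
  have hconst : ∀ t s : ℝ, z t - F t = z s - F s := by
    have : ∀ t s : ℝ, (fun t => z t - F t) t = (fun t => z t - F t) s := by
      intro t s
      exact is_const_of_deriv_eq_zero
        (fun u => (hdiff u).differentiableAt) (fun u => (hdiff u).deriv) t s
    exact this
  have hkey : ∀ t s : ℝ, z t = z s + (F t - F s) := by
    intro t s
    have := hconst t s
    linarith
  constructor
  · intro t
    have := hkey (t + 2 * π) t
    rw [this]
    simp only [hF, Real.sin_add_two_pi, Real.cos_add_two_pi]
    ring
  · rintro ⟨P, hP, hprop⟩
    obtain ⟨h1, h2, h3⟩ := hprop 0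
    rw [zero_add] at h1 h2 h3
    simp only [Real.cos_zero, Real.sin_zero] at h1 h2
    have hcos : Real.cos P = 1 := by
      have : ρ * Real.cos P = ρ * 1 := by linarith
      exact mul_left_cancel₀ (ne_of_gt hρ) this
    have hsin : Real.sin P = 0 := by
      have : ρ * Real.sin P = ρ * 0 := by linarith [h2]
      exact mul_left_cancel₀ (ne_of_gt hρ) this
    have := hkey P 0
    rw [h3] at this
    simp only [hF, hcos, hsin, Real.sin_zero, Real.cos_zero] at this
    have hρ2 : 0 < ρ ^ 2 * P := by positivity
    nlinarith
end

section
/- Consider the circular arc of radius ρ = sin φ / sin ψ joining two points of the unit circle subtending angle 2φ at the origin and angle 2ψ at the arc's center, where the arc lies on the far side (angle 2π − 2ψ traversed). The signed area enclosed between the arc and the unit circle (through the short boundary arc) equals Δz = sin φ cos φ − ((π − ψ)ρ² + sin ψ cos ψ · ρ²). In particular Δz = 0 if and only if cot φ = cot ψ + (π − ψ) csc² ψ (for φ, ψ ∈ (0, π)). -/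
open Real intervalIntegral

/-- The signed area swept by the circular arc of radius `ρ = sin φ / sin ψ`
joining two points of the unit circle (subtending angle `2φ` at the origin and
`2π − 2ψ` at the arc's center), computed as the horizontal-lift integral
`(1/2)∫(x y' − y x')`, equals
`Δz = sin φ cos φ − ((π − ψ)ρ² + sin ψ cos ψ ρ²)`; and `Δz = 0` iff
`cot φ = cot ψ + (π − ψ) csc² ψ`. -/
theorem stmt8 (φ ψ : ℝ) (hφ : φ ∈ Set.Ioo (0:ℝ) π) (hψ : ψ ∈ Set.Ioo (0:ℝ) π)
    (ρ cx : ℝ) (hρ : ρ = Real.sin φ / Real.sin ψ)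
    (hcx : cx = Real.cos φ - ρ * Real.cos ψ) :
    ((∫ t in (0:ℝ)..(2 * π - 2 * ψ),
      (1/2) * ((cx + ρ * Real.cos (-ψ - t)) * (-(ρ * Real.cos (-ψ - t)))
        - (ρ * Real.sin (-ψ - t)) * (ρ * Real.sin (-ψ - t))))
      = Real.sin φ * Real.cos φ
        - ((π - ψ) * ρ ^ 2 + Real.sin ψ * Real.cos ψ * ρ ^ 2)) ∧
    (Real.sin φ * Real.cos φ
        - ((π - ψ) * ρ ^ 2 + Real.sin ψ * Real.cos ψ * ρ ^ 2) = 0 ↔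
      Real.cos φ / Real.sin φ
        = Real.cos ψ / Real.sin ψ + (π - ψ) / Real.sin ψ ^ 2) := by
  obtain ⟨hφ0, hφπ⟩ := hφ
  obtain ⟨hψ0, hψπ⟩ := hψ
  have hsφ : 0 < Real.sin φ := Real.sin_pos_of_pos_of_lt_pi hφ0 hφπ
  have hsψ : 0 < Real.sin ψ := Real.sin_pos_of_pos_of_lt_pi hψ0 hψπ
  have hρψ : ρ * Real.sin ψ = Real.sin φ := by
    rw [hρ]; field_simp
  constructor
  · have hd : ∀ t ∈ Set.uIcc (0:ℝ) (2 * π - 2 * ψ),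
        HasDerivAt (fun t => -(ρ^2)/2 * t - cx * ρ / 2 * Real.sin (ψ + t))
          ((1/2) * ((cx + ρ * Real.cos (-ψ - t)) * (-(ρ * Real.cos (-ψ - t)))
            - (ρ * Real.sin (-ψ - t)) * (ρ * Real.sin (-ψ - t)))) t := by
      intro t _
      have h1 : HasDerivAt (fun t : ℝ => -(ρ^2)/2 * t) (-(ρ^2)/2) t := by
        simpa using (hasDerivAt_id t).const_mul (-(ρ^2)/2)
      have h2 : HasDerivAt (fun t : ℝ => Real.sin (ψ + t)) (Real.cos (ψ + t)) t := by
        simpa [Function.comp_def] using (Real.hasDerivAt_sin (ψ + t)).comp t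
          ((hasDerivAt_const t ψ).add (hasDerivAt_id t))
      have h3 := h1.sub (h2.const_mul (cx * ρ / 2))
      refine h3.congr_deriv (Eq.symm ?_)
      have hc : Real.cos (-ψ - t) = Real.cos (ψ + t) := by
        rw [show -ψ - t = -(ψ + t) by ring, Real.cos_neg]
      have hpy := Real.sin_sq_add_cos_sq (-ψ - t)
      linear_combination (-(ρ^2)/2) * hpy + (-(cx*ρ)/2) * hc
    have hcont : ContinuousOn (fun t =>
        (1/2) * ((cx + ρ * Real.cos (-ψ - t)) * (-(ρ * Real.cos (-ψ - t)))
          - (ρ * Real.sin (-ψ - t)) * (ρ * Real.sin (-ψ - t))))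
        (Set.uIcc (0:ℝ) (2 * π - 2 * ψ)) := by
      apply Continuous.continuousOn; fun_prop
    rw [intervalIntegral.integral_eq_sub_of_hasDerivAt hd hcont.intervalIntegrable]
    have hsin : Real.sin (ψ + (2 * π - 2 * ψ)) = - Real.sin ψ := by
      rw [show ψ + (2 * π - 2 * ψ) = 2 * π - ψ by ring, Real.sin_sub, Real.sin_two_pi,
        Real.cos_two_pi]
      ring
    rw [hsin]
    rw [hcx]
    simp only [mul_zero, add_zero]
    linear_combination Real.cos φ * hρψ
  · have key : Real.sin φ * Real.cos φ - ((π - ψ) * ρ ^ 2 + Real.sin ψ * Real.cos ψ * ρ ^ 2)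
        = (Real.sin φ / Real.sin ψ ^ 2) *
          (Real.cos φ * Real.sin ψ ^ 2 - Real.sin φ * (Real.cos ψ * Real.sin ψ + (π - ψ))) := by
      rw [hρ]; field_simp; ring
    rw [key]
    have hne : Real.sin φ / Real.sin ψ ^ 2 ≠ 0 := by positivity
    rw [mul_eq_zero, or_iff_right hne]
    rw [div_add_div _ _ (ne_of_gt hsψ) (by positivity), div_eq_div_iff (ne_of_gt hsφ) (by positivity)]
    constructor <;> intro h <;> nlinarith [h]
end

section
/- Consider a billiard reflection at the horizontal plane H = {z = 0} in (ℝ³, ξ_std, g_std) at a point at planar distance r > 0 from the origin. If the ingoing trajectory hits H with magnetic momentum a ∈ ℝ and its planar projection makes angle φ ∈ (0, π) with the radial line, then the outgoing angle with the radial line is π − φ and the outgoing magnetic momentum is a + 4 sin(φ)/r. -/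
open Real

lemma stmt10_key (r φ : ℝ) (hr : 0 < r) (s : ℝ) (hs : s ≠ 0)
    (h : Real.cos φ ^ 2 + (-Real.sin φ + s * (r / 2)) ^ 2 = 1) :
    s = 4 * Real.sin φ / r := by
  have hpyth : Real.sin φ ^ 2 + Real.cos φ ^ 2 = 1 := Real.sin_sq_add_cos_sq φ
  have h2 : s * (s * (r/2) - 2 * Real.sin φ) * (r/2) = 0 := by nlinarith
  have hr2 : (r/2) ≠ 0 := by positivity
  rcases mul_eq_zero.mp h2 with h3 | h3
  · rcases mul_eq_zero.mp h3 with h4 | h4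
    · exact absurd h4 hs
    · field_simp
      linarith [sub_eq_zero.mp h4]
  · exact absurd h3 hr2

/-- Billiard reflection at the horizontal plane `H = {z = 0}` in the standard
sub-Riemannian `ℝ³`, at a point at planar radius `r > 0`.  In the coframe
`(α, dx, dy)` at that point, `dz = α + (r/2)dy`; the ingoing unit covector with
angle of incidence `φ` against the radial line and magnetic momentum `a` is
`(a, cos φ, −sin φ)`.  The reflection adds a unique nonzero multiple `s` of
`dz` preserving unit energy, namely `s = 4 sin φ / r`; the outgoing momentum is
`a + 4 sin φ / r` and the outgoing planar direction makes angle `π − φ` with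
the radial line. -/
theorem stmt10 (r a φ : ℝ) (hr : 0 < r) (hφ : φ ∈ Set.Ioo (0:ℝ) π) :
    (∃! s : ℝ, s ≠ 0 ∧
      Real.cos φ ^ 2 + (-Real.sin φ + s * (r / 2)) ^ 2 = 1) ∧
    (∀ s : ℝ, s ≠ 0 →
      Real.cos φ ^ 2 + (-Real.sin φ + s * (r / 2)) ^ 2 = 1 →
      a + s = a + 4 * Real.sin φ / r ∧
      -Real.sin φ + s * (r / 2) = Real.sin (π - φ) ∧
      Real.cos φ = -Real.cos (π - φ)) := by
  have hsin : 0 < Real.sin φ := Real.sin_pos_of_pos_of_lt_pi hφ.1 hφ.2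
  have hrne : r ≠ 0 := ne_of_gt hr
  constructor
  · refine ⟨4 * Real.sin φ / r, ⟨by positivity, ?_⟩, fun s ⟨hs, h⟩ => stmt10_key r φ hr s hs h⟩
    have : 4 * Real.sin φ / r * (r / 2) = 2 * Real.sin φ := by field_simp; ring
    rw [this]
    have := Real.sin_sq_add_cos_sq φ
    nlinarith
  · intro s hs h
    have hse := stmt10_key r φ hr s hs h
    refine ⟨by rw [hse], ?_, by rw [Real.cos_pi_sub]; ring⟩
    rw [Real.sin_pi_sub, hse]
    field_simp
    ring
end

section
/- A germ of billiard trajectory in the half-space table {z ≥ 0} of (ℝ³, ξ_std, g_std) reflects to itself at a boundary point at radius r > 0 if and only if the ingoing angle with the radial direction is φ = π/2 and the ingoing magnetic momentum is a = −2/r. Equivalently: the only self-reflecting trajectories at radius r are those whose planar projection is a circle of radius r/2 centered at distance r/2 from the origin, passing through the reflection point and the origin. -/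
open Real

/-- Self-reflection in the half-space table `{z ≥ 0}` of the standard
sub-Riemannian `ℝ³`: the outgoing data `(a + 4 sin φ/r, cos φ, sin φ)` of the
reflection of the ingoing covector `(a, cos φ, −sin φ)` at a boundary point of
radius `r > 0` equals the time reversal `(−a, −cos φ, sin φ)` of the ingoing
covector if and only if `φ = π/2` and `a = −2/r`; in this case the radius of
curvature of the planar projection is `1/|a| = r/2`. -/
theorem stmt11 (r a φ : ℝ) (hr : 0 < r) (hφ : φ ∈ Set.Ioo (0:ℝ) π) :
    (((a + 4 * Real.sin φ / r, Real.cos φ, Real.sin φ) : ℝ × ℝ × ℝ)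
        = (-a, -Real.cos φ, Real.sin φ) ↔ (φ = π / 2 ∧ a = -2 / r)) ∧
    ((φ = π / 2 ∧ a = -2 / r) → 1 / |a| = r / 2) := by
  obtain ⟨h0, hπ⟩ := hφ
  constructor
  · constructor
    · intro h
      rw [Prod.ext_iff, Prod.ext_iff] at h
      obtain ⟨h1, h2, -⟩ := h
      have hc : Real.cos φ = 0 := by linarith
      have hφ2 : φ = π / 2 := by
        exact Real.injOn_cos ⟨le_of_lt h0, le_of_lt hπ⟩
          ⟨by positivity, by linarith [Real.pi_pos]⟩
          (by simp [hc, Real.cos_pi_div_two])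
      refine ⟨hφ2, ?_⟩
      rw [hφ2, Real.sin_pi_div_two] at h1
      field_simp at h1 ⊢
      linarith
    · rintro ⟨hφ2, ha⟩
      subst hφ2 ha
      simp [Prod.ext_iff, Real.sin_pi_div_two, Real.cos_pi_div_two]
      field_simp
      ring
  · rintro ⟨-, ha⟩
    subst ha
    have hneg : -2 / r < 0 := by
      have : (0:ℝ) < 2 / r := by positivity
      rw [neg_div]; linarith
    rw [abs_of_neg hneg]
    field_simp
end

section
/- Let T > 0. Define, for r > 0, R(r) = r·|cos(T/r)| and z₁(r) = rT/4 + (r²/8)·sin(2T/r). Then for every r > 0 and R₁ > 0 with R(r) = R₁, one has z₁(r) ≤ rT/4 + (1/4)·sqrt((r² − R₁²)·R₁²), with equality if and only if sin(2T/r) ≥ 0; and this upper bound is strictly increasing in r. Consequently, among all r with R(r) = R₁, the value z₁(r) is maximised at the largest such r. -/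
open Real Set

lemma aux_sqrt (T r R₁ : ℝ) (hr : 0 < r) (hR : r * |Real.cos (T / r)| = R₁) :
    Real.sqrt ((r ^ 2 - R₁ ^ 2) * R₁ ^ 2) = r ^ 2 / 2 * |Real.sin (2 * T / r)| := by
  have hR2 : R₁ ^ 2 = r ^ 2 * Real.cos (T / r) ^ 2 := by
    rw [← hR, mul_pow, sq_abs]
  have hs : r ^ 2 - R₁ ^ 2 = r ^ 2 * Real.sin (T / r) ^ 2 := by
    rw [hR2]; nlinarith [Real.sin_sq_add_cos_sq (T / r)]
  have h2 : 2 * T / r = 2 * (T / r) := by ring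
  rw [hs, hR2, h2, Real.sin_two_mul]
  have he : r ^ 2 * Real.sin (T / r) ^ 2 * (r ^ 2 * Real.cos (T / r) ^ 2)
      = (r ^ 2 / 2 * (2 * Real.sin (T / r) * Real.cos (T / r))) ^ 2 := by ring
  rw [he, Real.sqrt_sq_eq_abs, abs_mul, abs_of_nonneg (by positivity : (0:ℝ) ≤ r ^ 2 / 2)]

lemma aux_max (T R₁ rmax : ℝ) (hT : 0 < T) (hR₁ : 0 < R₁) (hrm : 0 < rmax)
    (hRm : rmax * |Real.cos (T / rmax)| = R₁)
    (hmax : ∀ r' : ℝ, 0 < r' → r' * |Real.cos (T / r')| = R₁ → r' ≤ rmax) :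
    0 ≤ Real.sin (2 * T / rmax) := by
  by_contra hneg
  push_neg at hneg
  have hπ := Real.pi_pos
  set θ := T / rmax with hθ
  have hθpos : 0 < θ := div_pos hT hrm
  have hsc : Real.sin θ * Real.cos θ < 0 := by
    have h2 : 2 * T / rmax = 2 * θ := by rw [hθ]; ring
    rw [h2, Real.sin_two_mul] at hneg; linarith
  have hrmaxeq : rmax = T / θ := by rw [hθ]; field_simp
  have hn0' : (0:ℤ) ≤ ⌊θ / π⌋ := Int.floor_nonneg.mpr (le_of_lt (div_pos hθpos hπ))
  clear_value θ
  set n : ℤ := ⌊θ / π⌋ with hn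
  have hnle : (n : ℝ) * π ≤ θ := by
    have := Int.floor_le (θ / π)
    calc (n:ℝ) * π ≤ θ / π * π := by rw [hn]; nlinarith
      _ = θ := by field_simp
  have hnlt : θ < ((n : ℝ) + 1) * π := by
    have := Int.lt_floor_add_one (θ / π)
    calc θ = θ / π * π := by field_simp
      _ < ((n:ℝ) + 1) * π := by rw [hn]; nlinarith
  have hn0 : 0 ≤ (n : ℝ) := by exact_mod_cast hn0'
  clear_value n
  set s' : ℝ := θ - n * π with hs'
  have hθeq : θ = s' + n * π := by rw [hs']; ring
  have hs'0 : 0 ≤ s' := by rw [hs']; linarith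
  have hs'1 : s' < π := by rw [hs']; linarith
  clear_value s'
  have hsin : Real.sin θ = (-1) ^ n * Real.sin s' := by rw [hθeq, Real.sin_add_int_mul_pi]
  have hcos : Real.cos θ = (-1) ^ n * Real.cos s' := by rw [hθeq, Real.cos_add_int_mul_pi]
  have hone : ((-1:ℝ)) ^ n * ((-1:ℝ)) ^ n = 1 := by rw [← mul_zpow]; norm_num
  have habs : |((-1:ℝ)) ^ n| = 1 := by
    rcases mul_self_eq_one_iff.mp hone with h | h <;> rw [h] <;> simp
  have hsc' : Real.sin s' * Real.cos s' < 0 := by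
    have heq : Real.sin θ * Real.cos θ = Real.sin s' * Real.cos s' := by
      rw [hsin, hcos]
      calc (-1:ℝ)^n * Real.sin s' * ((-1:ℝ)^n * Real.cos s')
          = ((-1:ℝ)^n * (-1:ℝ)^n) * (Real.sin s' * Real.cos s') := by ring
        _ = Real.sin s' * Real.cos s' := by rw [hone]; ring
    linarith [heq ▸ hsc]
  have hsins' : 0 < Real.sin s' := by
    rcases lt_or_eq_of_le (Real.sin_nonneg_of_nonneg_of_le_pi hs'0 hs'1.le) with h | h
    · exact h
    · exfalso; rw [← h] at hsc'; simp at hsc'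
  have hcoss' : Real.cos s' < 0 := by nlinarith
  have hs'half : π / 2 < s' := by
    by_contra h
    push_neg at h
    exact absurd (Real.cos_nonneg_of_mem_Icc ⟨by linarith, h⟩) (not_le.mpr hcoss')
  set s : ℝ := s' - π / 2 with hsdef
  have hs0 : 0 < s := by rw [hsdef]; linarith
  have hs2 : s < π / 2 := by rw [hsdef]; linarith
  have hs'eq : s' = π / 2 + s := by rw [hsdef]; ring
  clear_value s
  have hsins : 0 < Real.sin s := Real.sin_pos_of_pos_of_lt_pi hs0 (by linarith)
  set θ₁ : ℝ := n * π + π / 2 with hθ₁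
  set θ' : ℝ := n * π + π / 2 - s with hθ'
  have hθ'pos : 0 < θ' := by rw [hθ']; nlinarith
  have hθ₁pos : 0 < θ₁ := by rw [hθ₁]; nlinarith
  have hθ'lt : θ' < θ₁ := by rw [hθ', hθ₁]; linarith
  have hθ₁lt : θ₁ < θ := by rw [hθ₁, hθeq, hs'eq]; linarith
  have hcosθ₁ : Real.cos θ₁ = 0 := by
    have h : θ₁ = π / 2 + n * π := by rw [hθ₁]; ring
    rw [h, Real.cos_add_int_mul_pi, Real.cos_pi_div_two, mul_zero]
  have hcosθ' : |Real.cos θ'| = Real.sin s := by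
    have h : θ' = (π / 2 - s) + n * π := by rw [hθ']; ring
    rw [h, Real.cos_add_int_mul_pi, Real.cos_pi_div_two_sub, abs_mul, habs, one_mul,
      abs_of_pos hsins]
  have hcosθ : |Real.cos θ| = Real.sin s := by
    have h : θ = (s + π / 2) + n * π := by rw [hθeq, hs'eq]; ring
    rw [h, Real.cos_add_int_mul_pi, Real.cos_add_pi_div_two, abs_mul, habs, one_mul,
      abs_neg, abs_of_pos hsins]
  clear_value θ₁ θ'
  set r₁ : ℝ := T / θ₁ with hr₁
  set r' : ℝ := T / θ' with hr'
  have hr₁pos : 0 < r₁ := div_pos hT hθ₁pos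
  have hr'pos : 0 < r' := div_pos hT hθ'pos
  have hTr₁ : T / r₁ = θ₁ := by rw [hr₁]; field_simp
  have hTr' : T / r' = θ' := by rw [hr']; field_simp
  have hlt1 : rmax < r₁ := by
    rw [hrmaxeq, hr₁]; exact div_lt_div_of_pos_left hT hθ₁pos hθ₁lt
  have hlt2 : r₁ < r' := by
    rw [hr₁, hr']; exact div_lt_div_of_pos_left hT hθ'pos hθ'lt
  clear_value r₁ r'
  set F : ℝ → ℝ := fun r => r * |Real.cos (T / r)| with hF
  have hFr₁ : F r₁ = 0 := by simp [hF, hTr₁, hcosθ₁]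
  have hFr' : F r' = r' * Real.sin s := by simp [hF, hTr', hcosθ']
  have hR₁eq : R₁ = rmax * Real.sin s := by rw [← hRm, hcosθ]
  have hFr'gt : R₁ < F r' := by
    rw [hFr', hR₁eq]
    exact mul_lt_mul_of_pos_right (lt_trans hlt1 hlt2) hsins
  have hcont : ContinuousOn F (Icc r₁ r') := by
    apply ContinuousOn.mul continuousOn_id
    apply ContinuousOn.abs
    apply Real.continuous_cos.comp_continuousOn
    apply ContinuousOn.div continuousOn_const continuousOn_id
    intro x hx
    exact ne_of_gt (lt_of_lt_of_le hr₁pos hx.1)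
  have hsub := intermediate_value_Icc hlt2.le hcont
  have hmem : R₁ ∈ Icc (F r₁) (F r') := ⟨by rw [hFr₁]; exact hR₁.le, hFr'gt.le⟩
  obtain ⟨c, hcmem, hcF⟩ := hsub hmem
  have hcpos : 0 < c := lt_of_lt_of_le hr₁pos hcmem.1
  have hcle := hmax c hcpos hcF
  linarith [hcmem.1]

/-- For `R(r) = r|cos(T/r)|` and `z₁(r) = rT/4 + (r²/8)sin(2T/r)` (heights of
conormal geodesics from the plane `{z=0}` in the Heisenberg group): whenever
`R(r) = R₁`, one has `z₁(r) ≤ rT/4 + (1/4)√((r²−R₁²)R₁²)` with equality iff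
`sin(2T/r) ≥ 0`; the bound is strictly increasing in `r`, and hence `z₁` is
maximised at the largest `r` with `R(r) = R₁`. -/
theorem stmt12 (T : ℝ) (hT : 0 < T) :
    let R : ℝ → ℝ := fun r => r * |Real.cos (T / r)|
    let z₁ : ℝ → ℝ := fun r => r * T / 4 + r ^ 2 / 8 * Real.sin (2 * T / r)
    ∀ R₁ : ℝ, 0 < R₁ →
      (∀ r : ℝ, 0 < r → R r = R₁ →
        (z₁ r ≤ r * T / 4 + (1/4) * Real.sqrt ((r ^ 2 - R₁ ^ 2) * R₁ ^ 2) ∧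
         (z₁ r = r * T / 4 + (1/4) * Real.sqrt ((r ^ 2 - R₁ ^ 2) * R₁ ^ 2) ↔
           0 ≤ Real.sin (2 * T / r)))) ∧
      StrictMonoOn
        (fun r => r * T / 4 + (1/4) * Real.sqrt ((r ^ 2 - R₁ ^ 2) * R₁ ^ 2))
        (Set.Ici R₁) ∧
      (∀ r rmax : ℝ, 0 < r → 0 < rmax → R r = R₁ → R rmax = R₁ →
        (∀ r' : ℝ, 0 < r' → R r' = R₁ → r' ≤ rmax) → z₁ r ≤ z₁ rmax) := by
  intro R z₁ R₁ hR₁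
  have hb : ∀ r : ℝ, 0 < r → R r = R₁ →
      r * T / 4 + (1/4) * Real.sqrt ((r ^ 2 - R₁ ^ 2) * R₁ ^ 2)
        = r * T / 4 + r ^ 2 / 8 * |Real.sin (2 * T / r)| := by
    intro r hr hRr
    rw [aux_sqrt T r R₁ hr hRr]; ring
  have hle : ∀ r : ℝ, 0 < r → R r = R₁ → R₁ ≤ r := by
    intro r hr hRr
    calc R₁ = r * |Real.cos (T / r)| := hRr.symm
      _ ≤ r * 1 := by
          exact mul_le_mul_of_nonneg_left (Real.abs_cos_le_one _) hr.le
      _ = r := mul_one r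
  have hpart1 : ∀ r : ℝ, 0 < r → R r = R₁ →
      (z₁ r ≤ r * T / 4 + (1/4) * Real.sqrt ((r ^ 2 - R₁ ^ 2) * R₁ ^ 2) ∧
       (z₁ r = r * T / 4 + (1/4) * Real.sqrt ((r ^ 2 - R₁ ^ 2) * R₁ ^ 2) ↔
         0 ≤ Real.sin (2 * T / r))) := by
    intro r hr hRr
    rw [hb r hr hRr]
    have h8 : (0:ℝ) < r ^ 2 / 8 := by positivity
    constructor
    · have := le_abs_self (Real.sin (2 * T / r))
      have := mul_le_mul_of_nonneg_left this h8.le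
      show r * T / 4 + r ^ 2 / 8 * Real.sin (2 * T / r) ≤ _
      linarith
    · show r * T / 4 + r ^ 2 / 8 * Real.sin (2 * T / r) = _ ↔ _
      constructor
      · intro h
        have h' : r ^ 2 / 8 * Real.sin (2 * T / r) = r ^ 2 / 8 * |Real.sin (2 * T / r)| := by
          linarith
        have h'' := mul_left_cancel₀ (ne_of_gt h8) h'
        exact abs_nonneg _ |>.trans h''.ge
      · intro h; rw [abs_of_nonneg h]
  have hmono : StrictMonoOn
      (fun r => r * T / 4 + (1/4) * Real.sqrt ((r ^ 2 - R₁ ^ 2) * R₁ ^ 2))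
      (Set.Ici R₁) := by
    intro a ha b hbm hab
    simp only
    have ha' : R₁ ≤ a := ha
    have hsq : (a ^ 2 - R₁ ^ 2) * R₁ ^ 2 ≤ (b ^ 2 - R₁ ^ 2) * R₁ ^ 2 := by
      have : a ^ 2 ≤ b ^ 2 := by nlinarith
      nlinarith [sq_nonneg R₁]
    have h1 : a * T / 4 < b * T / 4 := by nlinarith
    have h2 : Real.sqrt ((a ^ 2 - R₁ ^ 2) * R₁ ^ 2) ≤ Real.sqrt ((b ^ 2 - R₁ ^ 2) * R₁ ^ 2) :=
      Real.sqrt_le_sqrt hsq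
    linarith
  refine ⟨hpart1, hmono, ?_⟩
  intro r rmax hr hrm hRr hRm hmax
  have hsin : 0 ≤ Real.sin (2 * T / rmax) := aux_max T R₁ rmax hT hR₁ hrm hRm hmax
  have hrle : r ≤ rmax := hmax r hr hRr
  have heq : z₁ rmax = rmax * T / 4 + (1/4) * Real.sqrt ((rmax ^ 2 - R₁ ^ 2) * R₁ ^ 2) :=
    ((hpart1 rmax hrm hRm).2).mpr hsin
  have h1 := (hpart1 r hr hRr).1
  have h2 : r * T / 4 + (1/4) * Real.sqrt ((r ^ 2 - R₁ ^ 2) * R₁ ^ 2)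
      ≤ rmax * T / 4 + (1/4) * Real.sqrt ((rmax ^ 2 - R₁ ^ 2) * R₁ ^ 2) :=
    hmono.monotoneOn (hle r hr hRr) (hle rmax hrm hRm) hrle
  linarith [heq ▸ (h1.trans h2)]
end

section
/- The function F(ψ) = [ψ + arctan(2√2·sin ψ)] − [sin ψ · cos ψ + 2√2·sin ψ] is monotone increasing on [π/2, π], and F(π) = π > 0; moreover F has a zero in (π/2, π) (numerically near ψ ≈ 1.584). In particular F(ψ) ≥ 0 for all ψ ∈ [1.99, π]. -/
open Real Set

lemma myArctan_le_self {x : ℝ} (hx : 0 ≤ x) : Real.arctan x ≤ x := by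
  rcases hx.eq_or_lt with h | h
  · simp [← h]
  · have h1 : 0 < Real.arctan x := by
      rw [← Real.arctan_zero]; exact Real.arctan_strictMono h
    have h2 : Real.arctan x < Real.tan (Real.arctan x) :=
      Real.lt_tan h1 (Real.arctan_lt_pi_div_two x)
    rw [Real.tan_arctan] at h2; exact h2.le

lemma mySelf_div_le_arctan {x : ℝ} (hx : 0 < x) : x / (1 + x ^ 2) ≤ Real.arctan x := by
  obtain ⟨c, hc, hceq⟩ := exists_hasDerivAt_eq_slope Real.arctan (fun t => 1 / (1 + t ^ 2)) hx
    Real.continuous_arctan.continuousOn (fun t _ => Real.hasDerivAt_arctan t)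
  rw [Real.arctan_zero, sub_zero, sub_zero] at hceq
  have hc0 : 0 < c := hc.1
  have hcx : c < x := hc.2
  have h1 : (0:ℝ) < 1 + c ^ 2 := by positivity
  have h2 : (0:ℝ) < 1 + x ^ 2 := by positivity
  have : Real.arctan x = x / (1 + c ^ 2) := by
    field_simp at hceq ⊢; linarith [hceq]
  rw [this]
  apply div_le_div_of_nonneg_left hx.le h1
  nlinarith

lemma myHasDerivAtF (ψ : ℝ) :
    HasDerivAt (fun ψ : ℝ =>
      (ψ + Real.arctan (2 * Real.sqrt 2 * Real.sin ψ))
        - (Real.sin ψ * Real.cos ψ + 2 * Real.sqrt 2 * Real.sin ψ))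
      (1 + 1 / (1 + (2 * Real.sqrt 2 * Real.sin ψ) ^ 2) * (2 * Real.sqrt 2 * Real.cos ψ)
        - (Real.cos ψ * Real.cos ψ + Real.sin ψ * (-Real.sin ψ) + 2 * Real.sqrt 2 * Real.cos ψ)) ψ := by
  have h1 : HasDerivAt (fun ψ : ℝ => 2 * Real.sqrt 2 * Real.sin ψ)
      (2 * Real.sqrt 2 * Real.cos ψ) ψ := (Real.hasDerivAt_sin ψ).const_mul _
  have h2 : HasDerivAt (fun ψ : ℝ => Real.arctan (2 * Real.sqrt 2 * Real.sin ψ))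
      (1 / (1 + (2 * Real.sqrt 2 * Real.sin ψ) ^ 2) * (2 * Real.sqrt 2 * Real.cos ψ)) ψ :=
    (Real.hasDerivAt_arctan _).comp ψ h1
  have h3 : HasDerivAt (fun ψ : ℝ => Real.sin ψ * Real.cos ψ)
      (Real.cos ψ * Real.cos ψ + Real.sin ψ * (-Real.sin ψ)) ψ :=
    (Real.hasDerivAt_sin ψ).mul (Real.hasDerivAt_cos ψ)
  exact ((hasDerivAt_id ψ).add h2).sub (h3.add h1)

lemma mySqrt2_lo : (1.4142135 : ℝ) < Real.sqrt 2 := by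
  nlinarith [Real.sq_sqrt (show (0:ℝ) ≤ 2 by norm_num), Real.sqrt_nonneg 2]

lemma mySqrt2_hi : Real.sqrt 2 < (1.4142136 : ℝ) := by
  nlinarith [Real.sq_sqrt (show (0:ℝ) ≤ 2 by norm_num), Real.sqrt_nonneg 2]

lemma mySin199_lo : (0.9 : ℝ) ≤ Real.sin 1.99 := by
  have h : Real.sin (1.99:ℝ) = Real.cos (π / 2 - 1.99) := (Real.cos_pi_div_two_sub _).symm
  rw [h]
  have hb := Real.one_sub_sq_div_two_le_cos (x := π / 2 - 1.99)
  have hpl := Real.pi_gt_d6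
  have hpu := Real.pi_lt_d6
  nlinarith [sq_nonneg (π / 2 - 1.99)]

lemma mySin199_hi : Real.sin 1.99 ≤ (0.92 : ℝ) := by
  have h : Real.sin (1.99:ℝ) = Real.cos (π / 2 - 1.99) := (Real.cos_pi_div_two_sub _).symm
  rw [h]
  have hpl := Real.pi_gt_d6
  have hpu := Real.pi_lt_d6
  have habs : |π / 2 - 1.99| ≤ 1 := by rw [abs_le]; constructor <;> nlinarith
  have hb := Real.cos_bound habs
  rw [abs_le] at hb
  have h4 : |π / 2 - 1.99| ^ 4 = ((π / 2 - 1.99) ^ 2) ^ 2 := by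
    rw [show (4:ℕ) = 2*2 from rfl, pow_mul, sq_abs]
  have hu2 : (π / 2 - 1.99) ^ 2 ≤ 0.17574 := by nlinarith
  have hl2 : (0.17573:ℝ) ≤ (π / 2 - 1.99) ^ 2 := by nlinarith
  nlinarith [hb.2, sq_nonneg ((π / 2 - 1.99) ^ 2 - 0.17574)]

/-- The function `F(ψ) = [ψ + arctan(2√2 sin ψ)] − [sin ψ cos ψ + 2√2 sin ψ]`
is monotone increasing on `[π/2, π]`, satisfies `F(π) = π > 0`, has a zero in
`(π/2, π)`, and is nonnegative on `[1.99, π]`. -/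
theorem stmt14 :
    let F : ℝ → ℝ := fun ψ =>
      (ψ + Real.arctan (2 * Real.sqrt 2 * Real.sin ψ))
        - (Real.sin ψ * Real.cos ψ + 2 * Real.sqrt 2 * Real.sin ψ)
    MonotoneOn F (Set.Icc (π / 2) π) ∧
    F π = π ∧ (0:ℝ) < π ∧
    (∃ ψ ∈ Set.Ioo (π / 2) π, F ψ = 0) ∧
    (∀ ψ ∈ Set.Icc (1.99:ℝ) π, 0 ≤ F ψ) := by
  intro F
  have hF : F = fun ψ =>
      (ψ + Real.arctan (2 * Real.sqrt 2 * Real.sin ψ))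
        - (Real.sin ψ * Real.cos ψ + 2 * Real.sqrt 2 * Real.sin ψ) := rfl
  have hpl := Real.pi_gt_d6
  have hpu := Real.pi_lt_d6
  have h2 : Real.sqrt 2 * Real.sqrt 2 = 2 := Real.mul_self_sqrt (by norm_num)
  have ha : (0:ℝ) < 2 * Real.sqrt 2 := by positivity
  have hcont : Continuous F := by
    rw [hF]
    exact ((continuous_id.add (Real.continuous_arctan.comp
      (continuous_const.mul Real.continuous_sin))).sub
      ((Real.continuous_sin.mul Real.continuous_cos).add
        (continuous_const.mul Real.continuous_sin)))
  -- monotonicity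
  have hmono : MonotoneOn F (Set.Icc (π / 2) π) := by
    apply monotoneOn_of_deriv_nonneg (convex_Icc _ _) hcont.continuousOn
    · intro x _
      rw [hF]
      exact (myHasDerivAtF x).differentiableAt.differentiableWithinAt
    · intro x hx
      rw [interior_Icc] at hx
      rw [hF, (myHasDerivAtF x).deriv]
      have hc : Real.cos x ≤ 0 :=
        Real.cos_nonpos_of_pi_div_two_le_of_le hx.1.le (by linarith [hx.2, Real.pi_pos])
      have hsc : Real.sin x ^ 2 + Real.cos x ^ 2 = 1 := Real.sin_sq_add_cos_sq x
      have h8 : (2 * Real.sqrt 2 * Real.sin x) ^ 2 = 8 * Real.sin x ^ 2 := by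
        rw [mul_pow, mul_pow, Real.sq_sqrt (by norm_num : (0:ℝ) ≤ 2)]; ring
      have hden : (0:ℝ) < 1 + 8 * Real.sin x ^ 2 := by positivity
      rw [h8]
      have e1 : 1 / (1 + 8 * Real.sin x ^ 2) * (2 * Real.sqrt 2 * Real.cos x)
          - 2 * Real.sqrt 2 * Real.cos x
          = 2 * Real.sqrt 2 * (-Real.cos x) * (8 * Real.sin x ^ 2 / (1 + 8 * Real.sin x ^ 2)) := by
        field_simp
        ring
      have e2 : (0:ℝ) ≤ 2 * Real.sqrt 2 * (-Real.cos x)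
          * (8 * Real.sin x ^ 2 / (1 + 8 * Real.sin x ^ 2)) := by
        apply mul_nonneg (mul_nonneg ha.le (by linarith))
        positivity
      nlinarith [e1, e2]
  have hFpi : F π = π := by
    rw [hF]; simp [Real.sin_pi, Real.cos_pi, Real.arctan_zero]
  refine ⟨hmono, hFpi, Real.pi_pos, ?_, ?_⟩
  -- zero in (π/2, π)
  · have hinv : ((2:ℝ) * Real.sqrt 2)⁻¹ = Real.sqrt 2 / 4 :=
      inv_eq_of_mul_eq_one_right (by linear_combination h2 / 2)
    have hq : (Real.sqrt 2 / 4) ^ 2 = 1 / 8 := by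
      rw [div_pow, Real.sq_sqrt (by norm_num : (0:ℝ) ≤ 2)]; norm_num
    have harc : Real.arctan ((2 * Real.sqrt 2)⁻¹) ≥ 2 * Real.sqrt 2 / 9 := by
      have hb := mySelf_div_le_arctan (x := (2 * Real.sqrt 2)⁻¹) (by positivity)
      rw [hinv, hq] at hb
      rw [hinv]
      calc (2 : ℝ) * Real.sqrt 2 / 9 = Real.sqrt 2 / 4 / (1 + 1/8) := by ring
        _ ≤ _ := hb
    have hsplit : Real.arctan (2 * Real.sqrt 2)
        = π / 2 - Real.arctan ((2 * Real.sqrt 2)⁻¹) := by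
      have := Real.arctan_inv_of_pos ha
      linarith
    have hFhalf : F (π / 2) < 0 := by
      rw [hF]
      simp only [Real.sin_pi_div_two, Real.cos_pi_div_two, mul_one, mul_zero]
      rw [hsplit]
      have hs := mySqrt2_lo
      linarith
    have h0mem : (0:ℝ) ∈ Set.Ioo (F (π / 2)) (F π) := ⟨hFhalf, by rw [hFpi]; exact Real.pi_pos⟩
    have := intermediate_value_Ioo (by linarith : π / 2 ≤ π) hcont.continuousOn h0mem
    obtain ⟨ψ, hψ, hψ0⟩ := this
    exact ⟨ψ, hψ, hψ0⟩
  -- nonneg on [1.99, π]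
  · intro ψ hψ
    have h199 : (1.99:ℝ) ∈ Set.Icc (π / 2) π := ⟨by linarith, by linarith⟩
    have hψ' : ψ ∈ Set.Icc (π / 2) π := ⟨le_trans h199.1 hψ.1, hψ.2⟩
    have hmle := hmono h199 hψ' hψ.1
    have hbase : 0 ≤ F 1.99 := by
      show (0:ℝ) ≤ (1.99 + Real.arctan (2 * Real.sqrt 2 * Real.sin 1.99))
        - (Real.sin 1.99 * Real.cos 1.99 + 2 * Real.sqrt 2 * Real.sin 1.99)
      have hs_lo := mySin199_lo
      have hs_hi := mySin199_hi
      have hc : Real.cos 1.99 ≤ 0 :=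
        Real.cos_nonpos_of_pi_div_two_le_of_le (by linarith) (by linarith)
      have hsc : 0 ≤ Real.sin 1.99 * (-Real.cos 1.99) :=
        mul_nonneg (by linarith) (by linarith)
      have has : (0:ℝ) < 2 * Real.sqrt 2 * Real.sin 1.99 :=
        mul_pos ha (by linarith)
      have hsplit : Real.arctan (2 * Real.sqrt 2 * Real.sin 1.99)
          = π / 2 - Real.arctan ((2 * Real.sqrt 2 * Real.sin 1.99)⁻¹) := by
        have := Real.arctan_inv_of_pos has
        linarith
      have harc : Real.arctan ((2 * Real.sqrt 2 * Real.sin 1.99)⁻¹)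
          ≤ (2 * Real.sqrt 2 * Real.sin 1.99)⁻¹ :=
        myArctan_le_self (by positivity)
      have hinv_le : (2 * Real.sqrt 2 * Real.sin 1.99)⁻¹ ≤ (2.5455:ℝ)⁻¹ := by
        apply inv_anti₀ (by norm_num)
        nlinarith [mySqrt2_lo]
      have hprod : 2 * Real.sqrt 2 * Real.sin 1.99 ≤ 2.60216 := by
        nlinarith [mySqrt2_hi]
      rw [hsplit]
      linarith [harc, hinv_le, hsc, hprod]
    calc (0:ℝ) ≤ F 1.99 := hbase
      _ ≤ F ψ := hmle
end

section
/- The function Δ(ψ) = ψ − cos ψ · sin ψ − sqrt(cos ψ (cos ψ + 1)) + (1/2)·arctan(2·sqrt(cos ψ (cos ψ + 1))) satisfies: (a) its derivative 2 sin²ψ + 2 sin ψ (2 cos ψ + 1)·sqrt(cos ψ(cos ψ+1)) / (1 + 4 cos ψ(cos ψ+1)) is positive on (π/3, π/2); (b) Δ(π/3) = π/2 − 3√3/4 > 0. Hence Δ(ψ) > 0 for all ψ ∈ [π/3, π/2]. -/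
open Real Set

lemma deriv_key (ψ : ℝ) (hψ : ψ ∈ Set.Ioo (π / 3) (π / 2)) :
    HasDerivAt (fun ψ => ψ - Real.cos ψ * Real.sin ψ
      - Real.sqrt (Real.cos ψ * (Real.cos ψ + 1))
      + (1/2) * Real.arctan (2 * Real.sqrt (Real.cos ψ * (Real.cos ψ + 1))))
      (2 * Real.sin ψ ^ 2
          + 2 * Real.sin ψ * (2 * Real.cos ψ + 1)
              * Real.sqrt (Real.cos ψ * (Real.cos ψ + 1))
            / (1 + 4 * (Real.cos ψ * (Real.cos ψ + 1)))) ψ := by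
  obtain ⟨h1, h2⟩ := hψ
  have hπ := Real.pi_pos
  have hc : 0 < Real.cos ψ := Real.cos_pos_of_mem_Ioo ⟨by linarith, h2⟩
  have hs : 0 < Real.sin ψ := Real.sin_pos_of_pos_of_lt_pi (by linarith) (by linarith)
  have hg : 0 < Real.cos ψ * (Real.cos ψ + 1) := by positivity
  have hsqrt : 0 < Real.sqrt (Real.cos ψ * (Real.cos ψ + 1)) := Real.sqrt_pos.mpr hg
  have hsq : Real.sqrt (Real.cos ψ * (Real.cos ψ + 1)) ^ 2 = Real.cos ψ * (Real.cos ψ + 1) :=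
    Real.sq_sqrt hg.le
  have hG : HasDerivAt (fun ψ => Real.cos ψ * (Real.cos ψ + 1))
      (-Real.sin ψ * (Real.cos ψ + 1) + Real.cos ψ * (-Real.sin ψ)) ψ :=
    (Real.hasDerivAt_cos ψ).mul ((Real.hasDerivAt_cos ψ).add_const 1)
  have hS : HasDerivAt (fun ψ => Real.sqrt (Real.cos ψ * (Real.cos ψ + 1)))
      (1 / (2 * Real.sqrt (Real.cos ψ * (Real.cos ψ + 1))) *
        (-Real.sin ψ * (Real.cos ψ + 1) + Real.cos ψ * (-Real.sin ψ))) ψ :=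
    (Real.hasDerivAt_sqrt hg.ne').comp ψ hG
  have hA : HasDerivAt (fun ψ => Real.arctan (2 * Real.sqrt (Real.cos ψ * (Real.cos ψ + 1))))
      (1 / (1 + (2 * Real.sqrt (Real.cos ψ * (Real.cos ψ + 1))) ^ 2) *
        (2 * (1 / (2 * Real.sqrt (Real.cos ψ * (Real.cos ψ + 1))) *
          (-Real.sin ψ * (Real.cos ψ + 1) + Real.cos ψ * (-Real.sin ψ))))) ψ :=
    (Real.hasDerivAt_arctan _).comp ψ (hS.const_mul 2)
  have h0 : HasDerivAt (fun ψ : ℝ => ψ - Real.cos ψ * Real.sin ψ)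
      (1 - (-Real.sin ψ * Real.sin ψ + Real.cos ψ * Real.cos ψ)) ψ :=
    (hasDerivAt_id ψ).sub ((Real.hasDerivAt_cos ψ).mul (Real.hasDerivAt_sin ψ))
  have := (h0.sub hS).add (hA.const_mul (1/2))
  refine this.congr_deriv (Eq.symm ?_)
  have hpyth := Real.sin_sq_add_cos_sq ψ
  have hden : (0:ℝ) < 1 + 4 * (Real.cos ψ * (Real.cos ψ + 1)) := by positivity
  have h4 : 1 + (2 * Real.sqrt (Real.cos ψ * (Real.cos ψ + 1))) ^ 2
      = 1 + 4 * (Real.cos ψ * (Real.cos ψ + 1)) := by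
    rw [mul_pow, hsq]; ring
  rw [h4]
  set S := Real.sqrt (Real.cos ψ * (Real.cos ψ + 1)) with hSdef
  field_simp
  linear_combination (2 * S * (1 + 4 * (Real.cos ψ * (Real.cos ψ + 1)))) * hpyth
    + (4 * Real.sin ψ * (2 * Real.cos ψ + 1)) * hsq

/-- The area-difference function
`Δ(ψ) = ψ − cos ψ sin ψ − √(cos ψ(cos ψ+1)) + (1/2)arctan(2√(cos ψ(cos ψ+1)))`
has positive derivative
`2 sin²ψ + 2 sin ψ(2 cos ψ+1)√(cos ψ(cos ψ+1))/(1+4 cos ψ(cos ψ+1))`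
on `(π/3, π/2)`, satisfies `Δ(π/3) = π/2 − 3√3/4 > 0`, and hence is positive on
`[π/3, π/2]`. -/
theorem stmt17 :
    let Δ : ℝ → ℝ := fun ψ => ψ - Real.cos ψ * Real.sin ψ
      - Real.sqrt (Real.cos ψ * (Real.cos ψ + 1))
      + (1/2) * Real.arctan (2 * Real.sqrt (Real.cos ψ * (Real.cos ψ + 1)))
    (∀ ψ ∈ Set.Ioo (π / 3) (π / 2),
      HasDerivAt Δ
        (2 * Real.sin ψ ^ 2
          + 2 * Real.sin ψ * (2 * Real.cos ψ + 1)
              * Real.sqrt (Real.cos ψ * (Real.cos ψ + 1))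
            / (1 + 4 * (Real.cos ψ * (Real.cos ψ + 1)))) ψ ∧
      0 < 2 * Real.sin ψ ^ 2
          + 2 * Real.sin ψ * (2 * Real.cos ψ + 1)
              * Real.sqrt (Real.cos ψ * (Real.cos ψ + 1))
            / (1 + 4 * (Real.cos ψ * (Real.cos ψ + 1)))) ∧
    Δ (π / 3) = π / 2 - 3 * Real.sqrt 3 / 4 ∧
    0 < π / 2 - 3 * Real.sqrt 3 / 4 ∧
    (∀ ψ ∈ Set.Icc (π / 3) (π / 2), 0 < Δ ψ) := by
  intro Δ
  have hπ := Real.pi_pos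
  have hderiv : ∀ ψ ∈ Set.Ioo (π / 3) (π / 2),
      HasDerivAt Δ
        (2 * Real.sin ψ ^ 2
          + 2 * Real.sin ψ * (2 * Real.cos ψ + 1)
              * Real.sqrt (Real.cos ψ * (Real.cos ψ + 1))
            / (1 + 4 * (Real.cos ψ * (Real.cos ψ + 1)))) ψ := fun ψ hψ => deriv_key ψ hψ
  have hpos : ∀ ψ ∈ Set.Ioo (π / 3) (π / 2),
      0 < 2 * Real.sin ψ ^ 2
          + 2 * Real.sin ψ * (2 * Real.cos ψ + 1)
              * Real.sqrt (Real.cos ψ * (Real.cos ψ + 1))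
            / (1 + 4 * (Real.cos ψ * (Real.cos ψ + 1))) := by
    intro ψ ⟨h1, h2⟩
    have hc : 0 < Real.cos ψ := Real.cos_pos_of_mem_Ioo ⟨by linarith, h2⟩
    have hs : 0 < Real.sin ψ := Real.sin_pos_of_pos_of_lt_pi (by linarith) (by linarith)
    have hsqrt : 0 ≤ Real.sqrt (Real.cos ψ * (Real.cos ψ + 1)) := Real.sqrt_nonneg _
    have : 0 ≤ 2 * Real.sin ψ * (2 * Real.cos ψ + 1)
              * Real.sqrt (Real.cos ψ * (Real.cos ψ + 1))
            / (1 + 4 * (Real.cos ψ * (Real.cos ψ + 1))) := by positivity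
    nlinarith [sq_nonneg (Real.sin ψ), hs]
  have hsqrt3 : Real.sqrt 3 < 2 := by
    nlinarith [Real.sq_sqrt (by norm_num : (0:ℝ) ≤ 3), Real.sqrt_nonneg 3]
  have hsqrt3' : 0 < Real.sqrt 3 := Real.sqrt_pos.mpr (by norm_num)
  have hval : Δ (π / 3) = π / 2 - 3 * Real.sqrt 3 / 4 := by
    have hsq34 : Real.sqrt (Real.cos (π/3) * (Real.cos (π/3) + 1)) = Real.sqrt 3 / 2 := by
      rw [Real.cos_pi_div_three]
      rw [show (1/2 : ℝ) * (1/2 + 1) = 3/4 by norm_num]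
      rw [show (3/4 : ℝ) = 3 / 2^2 by norm_num, Real.sqrt_div' , Real.sqrt_sq]
      all_goals norm_num
    have htan : Real.arctan (Real.sqrt 3) = π / 3 := by
      have : Real.tan (π/3) = Real.sqrt 3 := by
        rw [Real.tan_eq_sin_div_cos, Real.sin_pi_div_three, Real.cos_pi_div_three]
        ring
      rw [← this, Real.arctan_tan (by linarith) (by linarith)]
    show π/3 - Real.cos (π/3) * Real.sin (π/3) - _ + _ = _
    rw [hsq34, Real.cos_pi_div_three, Real.sin_pi_div_three,
        show 2 * (Real.sqrt 3 / 2) = Real.sqrt 3 by ring, htan]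
    ring
  have hbase : 0 < π / 2 - 3 * Real.sqrt 3 / 4 := by nlinarith [Real.pi_gt_three]
  refine ⟨fun ψ hψ => ⟨hderiv ψ hψ, hpos ψ hψ⟩, hval, hbase, ?_⟩
  have hcont : ContinuousOn Δ (Set.Icc (π / 3) (π / 2)) := by
    apply Continuous.continuousOn
    have hg : Continuous fun ψ : ℝ => Real.sqrt (Real.cos ψ * (Real.cos ψ + 1)) :=
      Real.continuous_sqrt.comp (Real.continuous_cos.mul (Real.continuous_cos.add continuous_const))
    exact ((continuous_id.sub (Real.continuous_cos.mul Real.continuous_sin)).sub hg).add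
      (continuous_const.mul (Real.continuous_arctan.comp (continuous_const.mul hg)))
  have hmono : StrictMonoOn Δ (Set.Icc (π / 3) (π / 2)) := by
    apply strictMonoOn_of_deriv_pos (convex_Icc _ _) hcont
    intro x hx
    rw [interior_Icc] at hx
    rw [(hderiv x hx).deriv]
    exact hpos x hx
  intro ψ hψ
  rcases eq_or_lt_of_le hψ.1 with h | h
  · rw [← h]; rw [hval]; exact hbase
  · have := hmono ⟨le_refl _, by linarith [hψ.2, hψ.1]⟩ hψ h
    rw [hval] at this
    exact hbase.trans this
end
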